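/- Let W ∈ ℝ^{m×m} be symmetric, and suppose U_ℓ ∈ ℝ^{m×ℓ} factors as U_ℓ = Q Σ Rᵀ where Q ∈ ℝ^{m×k} satisfies Qᵀ W Q = I_k, Σ ∈ ℝ^{k×k}, and R ∈ ℝ^{ℓ×k}. Let u ∈ ℝ^m, set e = u − Q Qᵀ W u and p = (eᵀ W e)^{1/2}; assume p > 0 and set ẽ = e/p. Then the m×(ℓ+1) matrix [U_ℓ | u] obtained by appending u as a new last column satisfies [U_ℓ | u] = [Q | ẽ] · Y · [[R, 0],[0, 1]]ᵀ, where Y ∈ ℝ^{(k+1)×(k+1)} is the block matrix [[Σ, Qᵀ W u],[0, p]], and moreover the matrix [Q | ẽ] ∈ ℝ^{m×(k+1)} satisfies [Q | ẽ]ᵀ W [Q | ẽ] = I_{k+1}. -/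

import Mathlib

open Matrix

noncomputable section

/-- `[A | b]`: the matrix obtained by appending the column `b` to the matrix `A`. -/
def appendCol {m n : Type*} (A : Matrix m n ℝ) (b : m → ℝ) :
    Matrix m (n ⊕ Fin 1) ℝ :=
  Matrix.of fun i => Sum.elim (A i) fun _ => b i

lemma appendCol_eq_fromCols {m n : Type*} (A : Matrix m n ℝ) (b : m → ℝ) :
    appendCol A b = fromCols A (Matrix.of fun i (_ : Fin 1) => b i) := by
  ext i (j | j) <;> rfl

theorem stmt0 {m ℓ k : ℕ}
    (W : Matrix (Fin m) (Fin m) ℝ) (hW : W.IsSymm)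
    (U : Matrix (Fin m) (Fin ℓ) ℝ)
    (Q : Matrix (Fin m) (Fin k) ℝ)
    (S : Matrix (Fin k) (Fin k) ℝ)
    (R : Matrix (Fin ℓ) (Fin k) ℝ)
    (hU : U = Q * S * Rᵀ)
    (hQ : Qᵀ * W * Q = 1)
    (u e : Fin m → ℝ)
    (he : e = u - Q *ᵥ (Qᵀ *ᵥ (W *ᵥ u)))
    (p : ℝ) (hp : p = Real.sqrt (e ⬝ᵥ (W *ᵥ e))) (hppos : 0 < p)
    (etil : Fin m → ℝ) (hetil : etil = p⁻¹ • e) :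
    appendCol U u =
      appendCol Q etil *
        fromBlocks S (Matrix.of fun i (_ : Fin 1) => (Qᵀ *ᵥ (W *ᵥ u)) i) 0
          (Matrix.of fun (_ : Fin 1) (_ : Fin 1) => p) *
        (fromBlocks R 0 0 1)ᵀ ∧
    (appendCol Q etil)ᵀ * W * appendCol Q etil = 1 := by
  have hp0 : p ≠ 0 := ne_of_gt hppos
  set d : Fin k → ℝ := Qᵀ *ᵥ (W *ᵥ u) with hd
  set C : Matrix (Fin m) (Fin 1) ℝ := Matrix.of fun i (_ : Fin 1) => etil i with hC
  set D : Matrix (Fin k) (Fin 1) ℝ := Matrix.of fun i (_ : Fin 1) => d i with hD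
  set P : Matrix (Fin 1) (Fin 1) ℝ := Matrix.of fun (_ : Fin 1) (_ : Fin 1) => p with hP
  -- key orthogonality fact
  have hWe : e ⬝ᵥ (W *ᵥ e) = p ^ 2 := by
    have hnn : 0 ≤ e ⬝ᵥ (W *ᵥ e) := by
      by_contra h
      push_neg at h
      have : p = 0 := by
        rw [hp, Real.sqrt_eq_zero_of_nonpos h.le]
      exact hp0 this
    rw [hp, Real.sq_sqrt hnn]
  have hQWe : Qᵀ *ᵥ (W *ᵥ e) = 0 := by
    have : Qᵀ *ᵥ (W *ᵥ e) = d - (Qᵀ * W * Q) *ᵥ d := by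
      rw [he]
      simp [mulVec_sub, hd, ← mulVec_mulVec, Matrix.mul_assoc]
    rw [this, hQ, one_mulVec, sub_self]
  have hCe : C = p⁻¹ • Matrix.replicateCol (Fin 1) e := by
    ext i j
    simp [hC, hetil]
  have hQWC : Qᵀ * W * C = 0 := by
    rw [hCe, Matrix.mul_smul, Matrix.mul_assoc, ← Matrix.replicateCol_mulVec,
      ← Matrix.replicateCol_mulVec, hQWe]
    ext i j; simp
  have hCWQ : Cᵀ * W * Q = 0 := by
    have h1 : (Cᵀ * W * Q)ᵀ = Qᵀ * W * C := by
      rw [Matrix.transpose_mul, Matrix.transpose_mul, transpose_transpose, hW.eq,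
        Matrix.mul_assoc]
    have h2 : (Cᵀ * W * Q)ᵀ = 0 := by rw [h1, hQWC]
    simpa using congrArg Matrix.transpose h2
  have hCWC : Cᵀ * W * C = 1 := by
    have hCt : Cᵀ = p⁻¹ • Matrix.replicateRow (Fin 1) e := by
      ext i j; simp [hC, hetil]
    rw [hCt, hCe, Matrix.smul_mul, Matrix.smul_mul, Matrix.mul_smul,
      Matrix.mul_assoc, ← Matrix.replicateCol_mulVec, Matrix.replicateRow_mul_replicateCol]
    ext i j
    have : p⁻¹ * (p⁻¹ * (e ⬝ᵥ W *ᵥ e)) = 1 := by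
      rw [hWe]; field_simp
    have ha : i = j := Subsingleton.elim i j
    subst ha
    simp [Matrix.one_apply, this]
  have hcol : (Matrix.of fun i (_ : Fin 1) => u i) = Q * D + C * P := by
    ext i j
    have h1 : (Q * D) i j = (Q *ᵥ d) i := by
      simp [mul_apply, hD, mulVec, dotProduct]
    have h2 : (C * P) i j = e i := by
      have : (C * P) i j = p⁻¹ * e i * p := by
        simp [mul_apply, hC, hP, hetil, Fin.sum_univ_one]
      rw [this]
      field_simp
    rw [Matrix.add_apply, h1, h2, he]
    simp
  constructor
  · rw [appendCol_eq_fromCols, appendCol_eq_fromCols, fromBlocks_transpose,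
      fromCols_mul_fromBlocks]
    erw [fromCols_mul_fromBlocks]
    simp [hU, hcol]
    rfl
  · rw [appendCol_eq_fromCols, transpose_fromCols, fromRows_mul, fromRows_mul,
      mul_fromCols, mul_fromCols, fromRows_fromCols_eq_fromBlocks,
      hQ, hQWC, hCWQ, hCWC, fromBlocks_one]
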